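/- For every integer s ≥ 3 and every integer λ with 0 ≤ λ ≤ (2^{s-1} − 3 − 2·(−1)^s)/3, it holds that P(s, 2^{s-1} − 2λ) ≤ 2^s − 1 − 3λ; that is, there exists an s-by-(2^s − 1 − 3λ) matrix over F_2 that is a (2^{s-1} − 2λ)-PIR generator matrix. -/

import Mathlib

/-- An `s × n` matrix `G` over `𝔽₂` is a `k`-PIR generator matrix if for every
index `i` there exist `k` pairwise disjoint recovery sets of column indices,
each of whose column sums equals the `i`-th standard unit vector. -/
def IsPIRMatrix (s n k : ℕ) (G : Matrix (Fin s) (Fin n) (ZMod 2)) : Prop :=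
  ∀ i : Fin s, ∃ R : Fin k → Finset (Fin n),
    (∀ j j' : Fin k, j ≠ j' → Disjoint (R j) (R j')) ∧
    ∀ j : Fin k, (∑ h ∈ R j, fun r : Fin s => G r h) = Pi.single i 1

/-- `PIRlen s k` is the smallest positive `n` for which an `s × n` `k`-PIR
generator matrix over `𝔽₂` exists. -/
noncomputable def PIRlen (s k : ℕ) : ℕ :=
  sInf {n : ℕ | 0 < n ∧ ∃ G : Matrix (Fin s) (Fin n) (ZMod 2), IsPIRMatrix s n k G}

theorem test : True := trivial

set_option linter.unusedSectionVars false

namespace PIRaux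

abbrev V (m : ℕ) := Fin m → ZMod 2

lemma sc_add_self : ∀ a : ZMod 2, a + a = 0 := by decide
lemma sc_add_eq_zero : ∀ a b : ZMod 2, a + b = 0 ↔ a = b := by decide

lemma vadd_self {m : ℕ} (x : V m) : x + x = 0 :=
  funext fun i => sc_add_self (x i)

lemma vadd_eq_zero {m : ℕ} (x y : V m) : x + y = 0 ↔ x = y := by
  constructor
  · intro h; funext i
    exact (sc_add_eq_zero _ _).1 (by simpa using congrFun h i)
  · rintro rfl; exact vadd_self x

lemma vcancel {m : ℕ} (x y : V m) : x + y + y = x := by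
  rw [add_assoc, vadd_self, add_zero]

/-- companion matrix of x^m + x + 1 acting on V m -/
def sig {m : ℕ} (v : V m) : V m := fun i =>
  if (i : ℕ) = 0 then v ⟨m-1, by have := i.isLt; omega⟩
  else if (i : ℕ) = 1 then v ⟨0, by have := i.isLt; omega⟩ + v ⟨m-1, by have := i.isLt; omega⟩
  else v ⟨(i:ℕ) - 1, by have := i.isLt; omega⟩

lemma sig_add {m : ℕ} (v w : V m) : sig (v + w) = sig v + sig w := by
  funext i
  simp only [sig, Pi.add_apply]
  split_ifs <;> ring

lemma sig_ker {m : ℕ} (hm : 2 ≤ m) (v : V m) (h : sig v = 0) : v = 0 := by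
  have h0 : v ⟨m-1, by omega⟩ = 0 := by
    have := congrFun h ⟨0, by omega⟩
    simpa [sig] using this
  have h1 : v ⟨0, by omega⟩ = 0 := by
    have := congrFun h ⟨1, by omega⟩
    simp [sig] at this
    rw [h0] at this
    simpa using this
  funext i
  rcases Nat.eq_zero_or_pos (i : ℕ) with hi | hi
  · have : i = ⟨0, by omega⟩ := Fin.ext hi
    rw [this]; exact h1
  · by_cases him : (i : ℕ) = m - 1
    · have : i = ⟨m-1, by omega⟩ := Fin.ext him
      rw [this]; exact h0
    · have hlt : (i : ℕ) + 1 < m := by have := i.isLt; omega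
      have := congrFun h ⟨(i:ℕ)+1, hlt⟩
      simp only [sig] at this
      rw [if_neg (by omega), if_neg (by omega)] at this
      simp only [Nat.add_sub_cancel] at this
      simpa [Fin.ext_iff] using this

lemma tau_ker {m : ℕ} (hm : 2 ≤ m) (v : V m) (h : v + sig v = 0) : v = 0 := by
  have hv : ∀ i, v i = sig v i := fun i =>
    (sc_add_eq_zero _ _).1 (by simpa using congrFun h i)
  have h0 : v ⟨0, by omega⟩ = v ⟨m-1, by omega⟩ := by
    have := hv ⟨0, by omega⟩
    simpa [sig] using this
  have h1 : v ⟨1, by omega⟩ = 0 := by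
    have := hv ⟨1, by omega⟩
    simp [sig] at this
    rw [this, ← h0, h0]
    exact sc_add_self _
  have chain : ∀ j : ℕ, ∀ hj : j + 1 < m, v ⟨j+1, hj⟩ = 0 := by
    intro j
    induction j with
    | zero => intro hj; exact h1
    | succ n ihn =>
      intro hj
      have := hv ⟨n+2, hj⟩
      simp only [sig] at this
      rw [if_neg (by omega), if_neg (by omega)] at this
      simp only [show n+2-1 = n+1 from rfl] at this
      rw [this]
      exact ihn (by omega)
  have hlast : v ⟨m-1, by omega⟩ = 0 := by
    obtain ⟨j, hj⟩ : ∃ j, m - 1 = j + 1 := ⟨m - 2, by omega⟩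
    have he : (⟨m-1, by omega⟩ : Fin m) = ⟨j+1, by omega⟩ := Fin.ext (by simp [hj])
    rw [he]; exact chain j (by omega)
  funext i
  rcases Nat.eq_zero_or_pos (i : ℕ) with hi | hi
  · have : i = ⟨0, by omega⟩ := Fin.ext hi
    rw [this, h0]; exact hlast
  · obtain ⟨j, hj⟩ : ∃ j, (i:ℕ) = j + 1 := ⟨(i:ℕ) - 1, by omega⟩
    have hval : i = ⟨j+1, by have := i.isLt; omega⟩ := Fin.ext hj
    rw [hval]
    exact chain j _

lemma sig_inj {m : ℕ} (hm : 2 ≤ m) : Function.Injective (sig (m := m)) := by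
  intro x y hxy
  rw [← vadd_eq_zero]
  apply sig_ker hm
  rw [sig_add, hxy, vadd_self]

lemma tau_inj {m : ℕ} (hm : 2 ≤ m) : Function.Injective (fun v : V m => v + sig v) := by
  intro x y hxy
  rw [← vadd_eq_zero]
  apply tau_ker hm
  rw [sig_add]
  have hxy' : x + sig x = y + sig y := hxy
  have : x + y + (sig x + sig y) = (x + sig x) + (y + sig y) := by ring
  rw [this, hxy', vadd_self]

/-- extend a vector by two extra coordinates -/
def ext {m : ℕ} (v : V m) (x y : ZMod 2) : V (m+2) := fun i =>
  if h : (i:ℕ) < m then v ⟨i, h⟩ else if (i:ℕ) = m then x else y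

lemma ext_add {m : ℕ} (v w : V m) (x y x' y' : ZMod 2) :
    ext v x y + ext w x' y' = ext (v+w) (x+x') (y+y') := by
  funext i
  simp only [ext, Pi.add_apply]
  split_ifs <;> rfl

lemma ext_zero {m : ℕ} : ext (0 : V m) 0 0 = 0 := by
  funext i
  simp only [ext]
  split_ifs <;> rfl

lemma ext_inj {m : ℕ} {v w : V m} {x y x' y' : ZMod 2}
    (h : ext v x y = ext w x' y') : v = w ∧ x = x' ∧ y = y' := by
  refine ⟨funext fun j => ?_, ?_, ?_⟩
  · have := congrFun h ⟨j, by have := j.isLt; omega⟩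
    simpa [ext, j.isLt] using this
  · have := congrFun h ⟨m, by omega⟩
    simpa [ext] using this
  · have := congrFun h ⟨m+1, by omega⟩
    simp only [ext] at this
    rw [dif_neg (by omega), dif_neg (by omega), if_neg (by omega), if_neg (by omega)] at this
    exact this

lemma ext_eq_zero {m : ℕ} {v : V m} {x y : ZMod 2} (h : ext v x y = 0) :
    v = 0 ∧ x = 0 ∧ y = 0 := by
  rw [← ext_zero] at h
  exact ext_inj h

def Good {ι : Type} {m : ℕ} (a b : ι → V m) : Prop :=
  (∀ j, a j ≠ 0 ∧ b j ≠ 0 ∧ a j + b j ≠ 0) ∧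
  (∀ j j', j ≠ j' → Disjoint ({a j, b j, a j + b j} : Finset (V m))
      ({a j', b j', a j' + b j'} : Finset (V m)))

lemma Good.comp {ι κ : Type} {m : ℕ} {a b : ι → V m} (h : Good a b)
    {f : κ → ι} (hf : Function.Injective f) : Good (a ∘ f) (b ∘ f) :=
  ⟨fun j => h.1 (f j), fun j j' hne => h.2 (f j) (f j') (fun e => hne (hf e))⟩

def L : ℕ → ℕ
  | 0 => 0
  | 1 => 0
  | 2 => 1
  | 3 => 1
  | (m+4) => L (m+2) + 2^(m+2)

lemma L_step (m : ℕ) (hm : 2 ≤ m) : L (m+2) = L m + 2^m := by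
  obtain ⟨k, rfl⟩ : ∃ k, m = k + 2 := ⟨m - 2, by omega⟩
  rfl

lemma L_val : ∀ k : ℕ, (3 * L (k+2) : ℤ) = 2^(k+2) - 3 + 2 * (-1 : ℤ)^(k+2) := by
  intro k
  induction k using Nat.strong_induction_on with
  | _ k ih =>
    match k with
    | 0 => norm_num [L]
    | 1 => norm_num [L]
    | (k+2) =>
      have h := ih k (by omega)
      have hL : L (k+4) = L (k+2) + 2^(k+2) := rfl
      rw [hL]
      push_cast
      have : (-1 : ℤ)^(k+4) = (-1 : ℤ)^(k+2) := by ring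
      rw [this]
      push_cast at h
      have h4 : (2:ℤ)^(k+2+2) = 4 * 2^(k+2) := by ring
      linarith [h]

/-- base lines: the single line {e₀, e₁, e₀+e₁} in `V m`, `m ≥ 2`. -/
lemma base_lines (m : ℕ) (hm : 2 ≤ m) :
    ∃ a b : Fin 1 → V m, Good a b := by
  refine ⟨fun _ => fun i => if (i:ℕ) = 0 then 1 else 0,
         fun _ => fun i => if (i:ℕ) = 1 then 1 else 0, ⟨fun j => ⟨?_, ?_, ?_⟩, ?_⟩⟩
  · intro h
    have := congrFun h ⟨0, by omega⟩
    simp at this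
  · intro h
    have := congrFun h ⟨1, by omega⟩
    simp at this
  · intro h
    have := congrFun h ⟨0, by omega⟩
    simp at this
  · intro j j' hne
    exact absurd (Subsingleton.elim j j') hne

def P (m : ℕ) : Prop := ∃ a b : Fin (L m) → V m, Good a b

lemma step_lines (m : ℕ) (hm : 2 ≤ m) (h : P m) : P (m+2) := by
  obtain ⟨a, b, hg⟩ := h
  set A : Fin (L m) ⊕ V m → V (m+2) :=
    Sum.elim (fun j => ext (a j) 0 0) (fun v => ext v 1 0) with hA
  set B : Fin (L m) ⊕ V m → V (m+2) :=
    Sum.elim (fun j => ext (b j) 0 0) (fun v => ext (sig v) 0 1) with hB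
  have hcard : Fintype.card (V m) = 2^m := by
    simp [Fintype.card_fun]
  have E : Fin (L (m+2)) ≃ Fin (L m) ⊕ V m := by
    refine (finCongr (L_step m hm)).trans ?_
    refine finSumFinEquiv.symm.trans (Equiv.sumCongr (Equiv.refl _) ?_)
    exact (Fintype.equivFinOfCardEq hcard).symm
  have hGood : Good A B := by
    constructor
    · rintro (j | v)
      · refine ⟨fun h => (hg.1 j).1 (ext_eq_zero h).1, fun h => (hg.1 j).2.1 (ext_eq_zero h).1, ?_⟩
        intro h
        rw [hA, hB] at h
        simp only [Sum.elim_inl] at h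
        rw [ext_add] at h
        exact (hg.1 j).2.2 (by simpa using (ext_eq_zero h).1)
      · refine ⟨fun h => ?_, fun h => ?_, fun h => ?_⟩
        · exact one_ne_zero (ext_eq_zero h).2.1
        · exact one_ne_zero (ext_eq_zero h).2.2
        · rw [hA, hB] at h
          simp only [Sum.elim_inr] at h
          rw [ext_add] at h
          exact one_ne_zero (ext_eq_zero h).2.1
    · have hmemA : ∀ (j : Fin (L m)) (x : V (m+2)),
          x ∈ ({A (.inl j), B (.inl j), A (.inl j) + B (.inl j)} : Finset (V (m+2))) →
          ∃ u ∈ ({a j, b j, a j + b j} : Finset (V m)), x = ext u 0 0 := by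
        intro j x hx
        simp only [hA, hB, Sum.elim_inl, Finset.mem_insert, Finset.mem_singleton] at hx
        rcases hx with rfl | rfl | rfl
        · exact ⟨a j, by simp, rfl⟩
        · exact ⟨b j, by simp, rfl⟩
        · exact ⟨a j + b j, by simp, by rw [ext_add]; simp⟩
      rintro (j | v) (j' | v') hne
      · -- old vs old
        have hne' : j ≠ j' := fun e => hne (by rw [e])
        rw [Finset.disjoint_left]
        intro x hx hx'
        obtain ⟨u, hu, rfl⟩ := hmemA j x hx
        obtain ⟨u', hu', he⟩ := hmemA j' _ hx'
        have : u = u' := (ext_inj he).1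
        subst this
        exact Finset.disjoint_left.1 (hg.2 j j' hne') hu hu'
      · -- old vs new
        rw [Finset.disjoint_left]
        intro x hx hx'
        obtain ⟨u, hu, rfl⟩ := hmemA j x hx
        simp only [hA, hB, Sum.elim_inr, Finset.mem_insert, Finset.mem_singleton] at hx'
        rw [ext_add] at hx'
        simp only [add_zero, zero_add] at hx'
        rcases hx' with he | he | he
        · exact absurd (ext_inj he).2.1 (by decide)
        · exact absurd (ext_inj he).2.2 (by decide)
        · exact absurd (ext_inj he).2.1 (by decide)
      · -- new vs old
        rw [Finset.disjoint_left]
        intro x hx hx'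
        obtain ⟨u, hu, rfl⟩ := hmemA j' x hx'
        simp only [hA, hB, Sum.elim_inr, Finset.mem_insert, Finset.mem_singleton] at hx
        rw [ext_add] at hx
        simp only [add_zero, zero_add] at hx
        rcases hx with he | he | he
        · exact absurd (ext_inj he).2.1 (by decide)
        · exact absurd (ext_inj he).2.2 (by decide)
        · exact absurd (ext_inj he).2.1 (by decide)
      · -- new vs new
        have hvv : v ≠ v' := fun e => hne (by rw [e])
        rw [Finset.disjoint_left]
        intro x hx hx'
        simp only [hA, hB, Sum.elim_inr, Finset.mem_insert, Finset.mem_singleton] at hx hx'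
        rw [ext_add] at hx hx'
        simp only [add_zero, zero_add] at hx hx'
        rcases hx with rfl | rfl | rfl <;> rcases hx' with he | he | he
        · exact hvv (ext_inj he).1
        · exact absurd (ext_inj he).2.1 (by decide)
        · exact absurd (ext_inj he).2.2 (by decide)
        · exact absurd (ext_inj he).2.1 (by decide)
        · exact hvv (sig_inj hm (ext_inj he).1)
        · exact absurd (ext_inj he).2.1 (by decide)
        · exact absurd (ext_inj he).2.2 (by decide)
        · exact absurd (ext_inj he).2.1 (by decide)
        · exact hvv (tau_inj hm (ext_inj he).1)
  exact ⟨A ∘ E, B ∘ E, hGood.comp E.injective⟩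

lemma lines_exist : ∀ m : ℕ, 2 ≤ m → P m := by
  have key : ∀ k : ℕ, P (k+2) ∧ P (k+3) := by
    intro k
    induction k with
    | zero =>
      constructor
      · obtain ⟨a, b, h⟩ := base_lines 2 (by norm_num)
        exact ⟨fun _ => a 0, fun _ => b 0, h.comp (f := fun _ : Fin (L 2) => (0 : Fin 1))
          (fun x y _ => by
            have hx : (x:ℕ) < 1 := x.isLt
            have hy : (y:ℕ) < 1 := y.isLt
            exact Fin.ext (by omega))⟩
      · obtain ⟨a, b, h⟩ := base_lines 3 (by norm_num)
        exact ⟨fun _ => a 0, fun _ => b 0, h.comp (f := fun _ : Fin (L 3) => (0 : Fin 1))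
          (fun x y _ => by
            have hx : (x:ℕ) < 1 := x.isLt
            have hy : (y:ℕ) < 1 := y.isLt
            exact Fin.ext (by omega))⟩
    | succ k ih =>
      exact ⟨ih.2, step_lines (k+2) (by omega) ih.1⟩
  intro m hm
  obtain ⟨k, rfl⟩ : ∃ k, m = k + 2 := ⟨m - 2, by omega⟩
  exact (key k).1

/-! ## parity and the embedding into V (m+1) -/

def par {s : ℕ} (v : V s) : ZMod 2 := ∑ r, v r

lemma par_add {s : ℕ} (v w : V s) : par (v + w) = par v + par w := by
  simp [par, Finset.sum_add_distrib]

lemma par_zero {s : ℕ} : par (0 : V s) = 0 := by simp [par]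

lemma par_single {s : ℕ} (i : Fin s) : par (Pi.single i (1 : ZMod 2)) = 1 := by
  simp [par, Pi.single_apply]

def phi {m : ℕ} (v : V m) : V (m+1) := fun i =>
  if h : (i:ℕ) < m then v ⟨i, h⟩ else ∑ j, v j

lemma phi_add {m : ℕ} (v w : V m) : phi (v + w) = phi v + phi w := by
  funext i
  simp only [phi, Pi.add_apply]
  split_ifs with h
  · rfl
  · rw [Finset.sum_add_distrib]

lemma phi_ker {m : ℕ} {v : V m} (h : phi v = 0) : v = 0 := by
  funext j
  have := congrFun h ⟨j, by have := j.isLt; omega⟩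
  simpa [phi, j.isLt] using this

lemma phi_inj {m : ℕ} : Function.Injective (phi (m := m)) := by
  intro x y hxy
  rw [← vadd_eq_zero]
  apply phi_ker
  rw [phi_add, hxy, vadd_self]

lemma par_phi {m : ℕ} (v : V m) : par (phi v) = 0 := by
  rw [par, Fin.sum_univ_castSucc]
  have h1 : ∀ j : Fin m, phi v j.castSucc = v j := by
    intro j
    simp only [phi, Fin.coe_castSucc]
    rw [dif_pos j.isLt]
  have h2 : phi v (Fin.last m) = ∑ j, v j := by
    simp only [phi, Fin.val_last]
    rw [dif_neg (by omega)]
  rw [h2]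
  rw [Finset.sum_congr rfl (fun j _ => h1 j)]
  exact sc_add_self _

/-! ## the construction -/

section Construction

variable {s lam : ℕ} (A B : Fin lam → V s) (i : Fin s)

def eVec (i : Fin s) : V s := Pi.single i 1

def Sset : Finset (V s) := Finset.univ.biUnion
  (fun j : Fin lam => ({A j, B j, A j + B j} : Finset (V s)))

def tripleE (j : Fin lam) : Finset (V s) :=
  {A j + eVec i, B j + eVec i, A j + B j + eVec i}

def Bfin : Finset (V s) :=
  Finset.univ \ (insert 0 (insert (eVec i)
    (Sset A B ∪ (Sset A B).image (fun v => v + eVec i))))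

def Sfam : Finset (Finset (V s)) :=
  insert {eVec i}
    ((Finset.univ.image (tripleE A B i)) ∪
     (Bfin A B i).image (fun v => ({v, v + eVec i} : Finset (V s))))

lemma sc3 : ∀ x y z : ZMod 2, (x + z) + ((y + z) + ((x + y) + z)) = z := by decide
lemma sc_pair : ∀ x z : ZMod 2, x + (x + z) = z := by decide

lemma vtriple {s : ℕ} (a b e : V s) : (a + e) + ((b + e) + ((a + b) + e)) = e :=
  funext fun r => sc3 (a r) (b r) (e r)

lemma vpair {s : ℕ} (x e : V s) : x + (x + e) = e :=
  funext fun r => sc_pair (x r) (e r)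

lemma eVec_ne_zero : eVec i ≠ 0 := by
  intro h
  have := congrFun h i
  simp [eVec, Pi.single_apply] at this

lemma par_eVec : par (eVec i) = 1 := par_single i

variable (hg : Good A B) (hparA : ∀ j, par (A j) = 0) (hparB : ∀ j, par (B j) = 0)

section WithGood
include hg

lemma triple_distinct (j : Fin lam) :
    A j ≠ B j ∧ A j ≠ A j + B j ∧ B j ≠ A j + B j := by
  obtain ⟨hA, hB, hAB⟩ := hg.1 j
  refine ⟨fun h => hAB ?_, fun h => hB ?_, fun h => hA ?_⟩
  · rw [← h, vadd_self]
  · have := (left_eq_add (a := A j) (b := B j)).1 h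
    exact this
  · nth_rewrite 1 [show B j = 0 + B j from (zero_add _).symm] at h
    have : (0 : V s) = A j := add_right_cancel h
    exact this.symm

lemma card_triple (j : Fin lam) :
    ({A j, B j, A j + B j} : Finset (V s)).card = 3 := by
  obtain ⟨h1, h2, h3⟩ := triple_distinct A B hg j
  rw [Finset.card_insert_of_notMem (by simp [h1, h2]),
      Finset.card_insert_of_notMem (by simp [h3]), Finset.card_singleton]

lemma card_Sset : (Sset A B).card = 3 * lam := by
  rw [Sset, Finset.card_biUnion (fun j _ j' _ hne => hg.2 j j' hne)]
  rw [Finset.sum_congr rfl (fun j _ => card_triple A B hg j)]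
  simp [mul_comm]

lemma zero_not_mem_Sset : (0 : V s) ∉ Sset A B := by
  intro h
  rw [Sset, Finset.mem_biUnion] at h
  obtain ⟨j, -, hj⟩ := h
  obtain ⟨hA, hB, hAB⟩ := hg.1 j
  simp only [Finset.mem_insert, Finset.mem_singleton] at hj
  rcases hj with h | h | h
  · exact hA h.symm
  · exact hB h.symm
  · exact hAB h.symm

end WithGood

lemma par_Sset (hparA : ∀ j, par (A j) = 0) (hparB : ∀ j, par (B j) = 0) :
    ∀ v ∈ Sset A B, par v = 0 := by
  intro v hv
  rw [Sset, Finset.mem_biUnion] at hv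
  obtain ⟨j, -, hj⟩ := hv
  simp only [Finset.mem_insert, Finset.mem_singleton] at hj
  rcases hj with rfl | rfl | rfl
  · exact hparA j
  · exact hparB j
  · rw [par_add, hparA j, hparB j, add_zero]

end Construction

section Construction2

variable {s lam : ℕ} (A B : Fin lam → V s) (i : Fin s)

lemma mem_Sset_of_mem_triple {j : Fin lam} {u : V s}
    (h : u ∈ ({A j, B j, A j + B j} : Finset (V s))) : u ∈ Sset A B := by
  rw [Sset, Finset.mem_biUnion]
  exact ⟨j, Finset.mem_univ j, h⟩

lemma mem_tripleE_iff {x : V s} {j : Fin lam} :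
    x ∈ tripleE A B i j ↔
      ∃ u ∈ ({A j, B j, A j + B j} : Finset (V s)), x = u + eVec i := by
  simp only [tripleE, Finset.mem_insert, Finset.mem_singleton]
  aesop

lemma mem_Bfin_iff {v : V s} :
    v ∈ Bfin A B i ↔ v ≠ 0 ∧ v ≠ eVec i ∧ v ∉ Sset A B ∧
      (∀ w ∈ Sset A B, w + eVec i ≠ v) := by
  rw [Bfin]
  simp only [Finset.mem_sdiff, Finset.mem_univ, true_and, Finset.mem_insert,
    Finset.mem_union, Finset.mem_image, not_or, not_exists]
  tauto

lemma Bfin_closed {v : V s} (hv : v ∈ Bfin A B i) : v + eVec i ∈ Bfin A B i := by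
  rw [mem_Bfin_iff] at hv ⊢
  obtain ⟨h0, he, hS, hS'⟩ := hv
  refine ⟨?_, ?_, ?_, ?_⟩
  · intro h; exact he ((vadd_eq_zero _ _).1 h)
  · intro h
    exact h0 (add_eq_right.1 h)
  · intro h
    exact hS' (v + eVec i) h (by rw [vcancel])
  · intro w hw hwe
    have : w = v := add_right_cancel hwe
    exact hS (this ▸ hw)

lemma par_mem_SsetE (hparA : ∀ j, par (A j) = 0) (hparB : ∀ j, par (B j) = 0)
    {x : V s} {j : Fin lam} (hx : x ∈ tripleE A B i j) : par x = 1 := by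
  rw [mem_tripleE_iff] at hx
  obtain ⟨u, hu, rfl⟩ := hx
  rw [par_add, par_Sset A B hparA hparB u (mem_Sset_of_mem_triple A B hu),
    par_eVec, zero_add]

end Construction2

section Construction3

variable {s lam : ℕ} (A B : Fin lam → V s) (i : Fin s)

lemma tripleE_image (j : Fin lam) :
    tripleE A B i j =
      ({A j, B j, A j + B j} : Finset (V s)).image (fun u => u + eVec i) := by
  ext x
  rw [mem_tripleE_iff, Finset.mem_image]
  constructor
  · rintro ⟨u, hu, rfl⟩; exact ⟨u, hu, rfl⟩
  · rintro ⟨u, hu, rfl⟩; exact ⟨u, hu, rfl⟩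

lemma pair_ne (v : V s) : v ≠ v + eVec i := by
  intro h
  exact eVec_ne_zero i (left_eq_add.1 h)

lemma card_pairE (v : V s) : ({v, v + eVec i} : Finset (V s)).card = 2 :=
  Finset.card_pair (pair_ne i v)

lemma pair_eq_pair {v w : V s} (hx : ∃ x, x ∈ ({v, v + eVec i} : Finset (V s)) ∧
    x ∈ ({w, w + eVec i} : Finset (V s))) :
    ({v, v + eVec i} : Finset (V s)) = {w, w + eVec i} := by
  obtain ⟨x, hx1, hx2⟩ := hx
  simp only [Finset.mem_insert, Finset.mem_singleton] at hx1 hx2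
  have key : ∀ a b : V s, a = b + eVec i →
      ({a, a + eVec i} : Finset (V s)) = {b, b + eVec i} := by
    intro a b h
    subst h
    rw [vcancel, Finset.pair_comm]
  rcases hx1 with rfl | rfl <;> rcases hx2 with h | h
  · rw [h]
  · exact key _ _ h
  · have := key _ _ h.symm
    rw [← this]
  · have : v = w := add_right_cancel h
    rw [this]

lemma eVec_not_mem_pair {v : V s} (hv : v ∈ Bfin A B i) :
    eVec i ∉ ({v, v + eVec i} : Finset (V s)) := by
  rw [mem_Bfin_iff] at hv
  simp only [Finset.mem_insert, Finset.mem_singleton]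
  rintro (h | h)
  · exact hv.2.1 h.symm
  · exact hv.1 (right_eq_add.1 h)

variable (hg : Good A B)

section WithGood2
include hg

lemma card_tripleE (j : Fin lam) : (tripleE A B i j).card = 3 := by
  rw [tripleE_image, Finset.card_image_of_injective _ (add_left_injective _)]
  exact card_triple A B hg j

lemma tripleE_disj {j j' : Fin lam} (hne : j ≠ j') :
    Disjoint (tripleE A B i j) (tripleE A B i j') := by
  rw [tripleE_image, tripleE_image]
  exact (Finset.disjoint_image (add_left_injective _)).2 (hg.2 j j' hne)

lemma eVec_not_mem_tripleE (j : Fin lam) : eVec i ∉ tripleE A B i j := by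
  rw [mem_tripleE_iff]
  rintro ⟨u, hu, he⟩
  have hu0 : u ≠ 0 := by
    obtain ⟨hA, hB, hAB⟩ := hg.1 j
    simp only [Finset.mem_insert, Finset.mem_singleton] at hu
    rcases hu with rfl | rfl | rfl <;> assumption
  exact hu0 (right_eq_add.1 he)

lemma tripleE_inj : Function.Injective (tripleE A B i) := by
  intro j j' h
  by_contra hne
  have hd := tripleE_disj A B i hg (hne : j ≠ j')
  rw [h] at hd
  have hemp : tripleE A B i j' = ∅ := Finset.eq_empty_of_forall_notMem
    (fun x hx => (Finset.disjoint_left.1 hd hx) hx)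
  have h3 : (tripleE A B i j').card = 3 := card_tripleE A B i hg j'
  rw [hemp] at h3
  simp at h3

end WithGood2

lemma pair_disj_tripleE {v : V s} (hv : v ∈ Bfin A B i) (j : Fin lam) :
    Disjoint (tripleE A B i j) ({v, v + eVec i} : Finset (V s)) := by
  rw [Finset.disjoint_left]
  intro x hxt hxp
  rw [mem_tripleE_iff] at hxt
  obtain ⟨u, hu, rfl⟩ := hxt
  have huS : u ∈ Sset A B := mem_Sset_of_mem_triple A B hu
  rw [mem_Bfin_iff] at hv
  simp only [Finset.mem_insert, Finset.mem_singleton] at hxp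
  rcases hxp with h | h
  · exact hv.2.2.2 u huS h
  · have : u = v := add_right_cancel h
    exact hv.2.2.1 (this ▸ huS)

end Construction3

section Construction4

variable {s lam : ℕ} (A B : Fin lam → V s) (i : Fin s)

lemma mem_Sfam_iff {t : Finset (V s)} :
    t ∈ Sfam A B i ↔ t = {eVec i} ∨ (∃ j, tripleE A B i j = t) ∨
      (∃ v ∈ Bfin A B i, ({v, v + eVec i} : Finset (V s)) = t) := by
  simp [Sfam, Finset.mem_insert, Finset.mem_union, Finset.mem_image]

variable (hg : Good A B)
section WithGood3
include hg

lemma Sfam_sum : ∀ t ∈ Sfam A B i, ∑ v ∈ t, v = eVec i := by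
  intro t ht
  rw [mem_Sfam_iff] at ht
  rcases ht with rfl | ⟨j, rfl⟩ | ⟨v, hv, rfl⟩
  · exact Finset.sum_singleton _ _
  · obtain ⟨d1, d2, d3⟩ := triple_distinct A B hg j
    have e1 : A j + eVec i ≠ B j + eVec i := fun h => d1 (add_right_cancel h)
    have e2 : A j + eVec i ≠ A j + B j + eVec i := fun h => d2 (add_right_cancel h)
    have e3 : B j + eVec i ≠ A j + B j + eVec i := fun h => d3 (add_right_cancel h)
    rw [tripleE, Finset.sum_insert (by simp [e1, e2]), Finset.sum_pair e3]
    exact vtriple _ _ _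
  · rw [Finset.sum_pair (pair_ne i v)]
    exact vpair _ _

lemma Sfam_disjoint : ∀ t ∈ Sfam A B i, ∀ t' ∈ Sfam A B i, t ≠ t' →
    Disjoint t t' := by
  intro t ht t' ht' hne
  rw [mem_Sfam_iff] at ht ht'
  rcases ht with rfl | ⟨j, rfl⟩ | ⟨v, hv, rfl⟩ <;>
    rcases ht' with rfl | ⟨j', rfl⟩ | ⟨v', hv', rfl⟩
  · exact absurd rfl hne
  · rw [Finset.disjoint_left]
    intro x hx hx'
    rw [Finset.mem_singleton] at hx
    subst hx
    exact eVec_not_mem_tripleE A B i hg j' hx'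
  · rw [Finset.disjoint_left]
    intro x hx hx'
    rw [Finset.mem_singleton] at hx
    subst hx
    exact eVec_not_mem_pair A B i hv' hx'
  · rw [Finset.disjoint_right]
    intro x hx hx'
    rw [Finset.mem_singleton] at hx
    subst hx
    exact eVec_not_mem_tripleE A B i hg j hx'
  · have hjj : j ≠ j' := fun h => hne (by rw [h])
    exact tripleE_disj A B i hg hjj
  · exact pair_disj_tripleE A B i hv' j
  · rw [Finset.disjoint_right]
    intro x hx hx'
    rw [Finset.mem_singleton] at hx
    subst hx
    exact eVec_not_mem_pair A B i hv hx'
  · exact (pair_disj_tripleE A B i hv j').symm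
  · rw [Finset.disjoint_left]
    intro x hx hx'
    exact hne (pair_eq_pair i ⟨x, hx, hx'⟩)

lemma Sfam_subC (hparA : ∀ j, par (A j) = 0) (hparB : ∀ j, par (B j) = 0) :
    ∀ t ∈ Sfam A B i, ∀ v ∈ t, v ≠ 0 ∧ v ∉ Sset A B := by
  intro t ht v hvt
  rw [mem_Sfam_iff] at ht
  have hpar1 : par v = 1 → v ≠ 0 ∧ v ∉ Sset A B := by
    intro h
    constructor
    · intro h0; rw [h0, par_zero] at h; exact absurd h (by decide)
    · intro hS
      rw [par_Sset A B hparA hparB v hS] at h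
      exact absurd h (by decide)
  rcases ht with rfl | ⟨j, rfl⟩ | ⟨w, hw, rfl⟩
  · rw [Finset.mem_singleton] at hvt
    subst hvt
    exact hpar1 (par_eVec i)
  · exact hpar1 (par_mem_SsetE A B i hparA hparB hvt)
  · rw [mem_Bfin_iff] at hw
    simp only [Finset.mem_insert, Finset.mem_singleton] at hvt
    rcases hvt with rfl | rfl
    · exact ⟨hw.1, hw.2.2.1⟩
    · constructor
      · intro h0
        exact hw.2.1 ((vadd_eq_zero _ _).1 h0)
      · intro hS
        exact hw.2.2.2 _ hS (by rw [vcancel]) |>.elim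
        
end WithGood3

end Construction4

section Construction5

variable {s lam : ℕ} (A B : Fin lam → V s) (i : Fin s)
variable (hg : Good A B) (hparA : ∀ j, par (A j) = 0) (hparB : ∀ j, par (B j) = 0)

include hg hparA hparB

lemma card_Bfin : (Bfin A B i).card = 2^s - (6 * lam + 2) := by
  have hs' : ∀ v ∈ (Sset A B).image (fun v => v + eVec i), par v = 1 := by
    intro v hv
    rw [Finset.mem_image] at hv
    obtain ⟨w, hw, rfl⟩ := hv
    rw [par_add, par_Sset A B hparA hparB w hw, par_eVec, zero_add]
  have hSS' : Disjoint (Sset A B) ((Sset A B).image (fun v => v + eVec i)) := by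
    rw [Finset.disjoint_left]
    intro x hx hx'
    have h0 := par_Sset A B hparA hparB x hx
    have h1 := hs' x hx'
    rw [h0] at h1
    exact absurd h1 (by decide)
  have hcardS' : ((Sset A B).image (fun v => v + eVec i)).card = 3 * lam := by
    rw [Finset.card_image_of_injective _ (add_left_injective _)]
    exact card_Sset A B hg
  have he_not : eVec i ∉ Sset A B ∪ (Sset A B).image (fun v => v + eVec i) := by
    rw [Finset.mem_union]
    rintro (h | h)
    · have := par_Sset A B hparA hparB _ h
      rw [par_eVec] at this
      exact absurd this (by decide)
    · rw [Finset.mem_image] at h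
      obtain ⟨w, hw, hwe⟩ := h
      have : w = 0 := add_eq_right.1 hwe
      exact zero_not_mem_Sset A B hg (this ▸ hw)
  have h0_not : (0 : V s) ∉ insert (eVec i)
      (Sset A B ∪ (Sset A B).image (fun v => v + eVec i)) := by
    rw [Finset.mem_insert, Finset.mem_union]
    rintro (h | h | h)
    · exact eVec_ne_zero i h.symm
    · exact zero_not_mem_Sset A B hg h
    · rw [Finset.mem_image] at h
      obtain ⟨w, hw, hwe⟩ := h
      have hwe' : w = eVec i := (vadd_eq_zero _ _).1 hwe
      have := par_Sset A B hparA hparB w hw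
      rw [hwe', par_eVec] at this
      exact absurd this (by decide)
  rw [Bfin, Finset.card_sdiff_of_subset (Finset.subset_univ _)]
  rw [Finset.card_insert_of_notMem h0_not, Finset.card_insert_of_notMem he_not,
    Finset.card_union_of_disjoint hSS', card_Sset A B hg, hcardS']
  rw [Finset.card_univ]
  have : Fintype.card (V s) = 2^s := by simp [Fintype.card_fun]
  rw [this]
  omega

lemma card_Sfam (hl : 3 * lam + 1 ≤ 2^(s-1)) (hs : 1 ≤ s) :
    (Sfam A B i).card = 2^(s-1) - 2 * lam := by
  classical
  set Tset := Finset.univ.image (tripleE A B i) with hT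
  set Pset := (Bfin A B i).image (fun v => ({v, v + eVec i} : Finset (V s))) with hP
  have hcardT : Tset.card = lam := by
    rw [hT, Finset.card_image_of_injective _ (tripleE_inj A B i hg)]
    simp
  have hmemT : ∀ t ∈ Tset, t.card = 3 := by
    intro t ht
    rw [hT, Finset.mem_image] at ht
    obtain ⟨j, -, rfl⟩ := ht
    exact card_tripleE A B i hg j
  have hmemP : ∀ t ∈ Pset, t.card = 2 := by
    intro t ht
    rw [hP, Finset.mem_image] at ht
    obtain ⟨v, -, rfl⟩ := ht
    exact card_pairE i v
  have hTP : Disjoint Tset Pset := by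
    rw [Finset.disjoint_left]
    intro t ht ht'
    have := hmemT t ht
    rw [hmemP t ht'] at this
    omega
  have hsing : ({eVec i} : Finset (V s)) ∉ Tset ∪ Pset := by
    rw [Finset.mem_union]
    rintro (h | h)
    · have := hmemT _ h
      simp at this
    · have := hmemP _ h
      simp at this
  have hcardP : 2 * Pset.card = (Bfin A B i).card := by
    rw [Finset.card_eq_sum_card_image (fun v => ({v, v + eVec i} : Finset (V s)))
      (Bfin A B i), ← hP]
    have hfib : ∀ t ∈ Pset, ((Bfin A B i).filter
        (fun v => ({v, v + eVec i} : Finset (V s)) = t)).card = 2 := by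
      intro t ht
      rw [hP, Finset.mem_image] at ht
      obtain ⟨v, hv, rfl⟩ := ht
      have : (Bfin A B i).filter
          (fun w => ({w, w + eVec i} : Finset (V s)) = {v, v + eVec i})
          = {v, v + eVec i} := by
        ext w
        rw [Finset.mem_filter]
        constructor
        · rintro ⟨hw, hpair⟩
          rw [← hpair]
          simp
        · intro hw
          simp only [Finset.mem_insert, Finset.mem_singleton] at hw
          rcases hw with rfl | rfl
          · exact ⟨hv, rfl⟩
          · refine ⟨Bfin_closed A B i hv, ?_⟩
            rw [vcancel, Finset.pair_comm]
        
      rw [this]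
      exact card_pairE i v
    rw [Finset.sum_congr rfl hfib]
    rw [Finset.sum_const, smul_eq_mul, mul_comm]
  have hcardB := card_Bfin A B i hg hparA hparB
  have h2s : (2:ℕ)^s = 2^(s-1) * 2 := by
    conv_lhs => rw [show s = s - 1 + 1 by omega]
    rw [pow_succ]
  have hSfam : (Sfam A B i).card = 1 + (Tset.card + Pset.card) := by
    rw [Sfam, ← hT, ← hP, Finset.card_insert_of_notMem hsing,
      Finset.card_union_of_disjoint hTP]
    omega
  rw [hSfam, hcardT]
  omega

end Construction5

lemma construction (s lam : ℕ) (hs : 1 ≤ s)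
    (A B : Fin lam → V s) (hg : Good A B)
    (hparA : ∀ j, par (A j) = 0) (hparB : ∀ j, par (B j) = 0)
    (hl : 3 * lam + 1 ≤ 2^(s-1)) :
    ∃ G : Matrix (Fin s) (Fin (2^s - 1 - 3*lam)) (ZMod 2),
      IsPIRMatrix s (2^s - 1 - 3*lam) (2^(s-1) - 2*lam) G := by
  classical
  set n := 2^s - 1 - 3*lam with hn
  set C : Finset (V s) := Finset.univ \ insert 0 (Sset A B) with hCdef
  have hcardV : Fintype.card (V s) = 2^s := by simp [Fintype.card_fun]
  have h0S : (0:V s) ∉ Sset A B := zero_not_mem_Sset A B hg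
  have hC : C.card = n := by
    rw [hCdef, Finset.card_sdiff_of_subset (Finset.subset_univ _),
      Finset.card_insert_of_notMem h0S, card_Sset A B hg, Finset.card_univ, hcardV]
    omega
  set ι : Fin n → V s :=
    fun h => (C.equivFin.symm (Fin.cast hC.symm h) : {x // x ∈ C}).1 with hιdef
  have hιC : ∀ h, ι h ∈ C := fun h => (C.equivFin.symm _).2
  have hιinj : Function.Injective ι := by
    intro h h' hee
    have h1 : C.equivFin.symm (Fin.cast hC.symm h) =
        C.equivFin.symm (Fin.cast hC.symm h') := Subtype.ext hee
    have h2 := C.equivFin.symm.injective h1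
    exact Fin.cast_injective _ h2
  have hsurjC : ∀ v ∈ C, ∃ h, ι h = v := by
    intro v hv
    refine ⟨Fin.cast hC (C.equivFin ⟨v, hv⟩), ?_⟩
    show (C.equivFin.symm (Fin.cast hC.symm (Fin.cast hC (C.equivFin ⟨v, hv⟩)))).1 = v
    have h3 : (Fin.cast hC.symm (Fin.cast hC (C.equivFin ⟨v, hv⟩))) =
        C.equivFin ⟨v, hv⟩ := rfl
    rw [h3, Equiv.symm_apply_apply]
  have hmemC : ∀ v : V s, v ≠ 0 → v ∉ Sset A B → v ∈ C := by
    intro v h0 hS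
    rw [hCdef, Finset.mem_sdiff]
    refine ⟨Finset.mem_univ v, ?_⟩
    rw [Finset.mem_insert]
    rintro (h | h)
    · exact h0 h
    · exact hS h
  refine ⟨Matrix.of (fun r h => ι h r), ?_⟩
  intro i
  have transfer : ∀ t : Finset (V s), (∀ v ∈ t, v ∈ C) →
      ∑ h ∈ Finset.univ.filter (fun h => ι h ∈ t), ι h = ∑ v ∈ t, v := by
    intro t hsub
    have himg : t = (Finset.univ.filter (fun h => ι h ∈ t)).image ι := by
      ext v
      rw [Finset.mem_image]
      constructor
      · intro hv
        obtain ⟨h, rfl⟩ := hsurjC v (hsub v hv)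
        exact ⟨h, by simp [Finset.mem_filter, hv], rfl⟩
      · rintro ⟨h, hh, rfl⟩
        exact (Finset.mem_filter.1 hh).2
    conv_rhs => rw [himg]
    rw [Finset.sum_image (fun x _ y _ hxy => hιinj hxy)]
  have hk : (Sfam A B i).card = 2^(s-1) - 2*lam :=
    card_Sfam A B i hg hparA hparB hl hs
  set enum : Fin (2^(s-1) - 2*lam) → Finset (V s) :=
    fun j => ((Sfam A B i).equivFin.symm (Fin.cast hk.symm j)).1 with henumdef
  have henum_mem : ∀ j, enum j ∈ Sfam A B i := fun j => ((Sfam A B i).equivFin.symm _).2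
  have henum_inj : Function.Injective enum := by
    intro j j' hee
    have h1 : (Sfam A B i).equivFin.symm (Fin.cast hk.symm j) =
        (Sfam A B i).equivFin.symm (Fin.cast hk.symm j') := Subtype.ext hee
    have h2 := (Sfam A B i).equivFin.symm.injective h1
    exact Fin.cast_injective _ h2
  refine ⟨fun j => Finset.univ.filter (fun h => ι h ∈ enum j), ?_, ?_⟩
  · intro j j' hne
    have hne' : enum j ≠ enum j' := fun h => hne (henum_inj h)
    have hdisj := Sfam_disjoint A B i hg _ (henum_mem j) _ (henum_mem j') hne'
    rw [Finset.disjoint_left]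
    intro h hh hh'
    exact Finset.disjoint_left.1 hdisj (Finset.mem_filter.1 hh).2
      (Finset.mem_filter.1 hh').2
  · intro j
    have hsub : ∀ v ∈ enum j, v ∈ C := by
      intro v hv
      obtain ⟨h0, hS⟩ := Sfam_subC A B i hg hparA hparB _ (henum_mem j) v hv
      exact hmemC v h0 hS
    have hsum := Sfam_sum A B i hg _ (henum_mem j)
    show (∑ h ∈ Finset.univ.filter (fun h => ι h ∈ enum j), ι h) = Pi.single i 1
    rw [transfer _ hsub, hsum]
    rfl

lemma neg_one_pow_cases (m : ℕ) : ((-1:ℤ))^m = 1 ∨ ((-1:ℤ))^m = -1 := by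
  rcases Nat.even_or_odd m with h | h
  · left; exact h.neg_one_pow
  · right; exact h.neg_one_pow

end PIRaux

open PIRaux

/-- For `s ≥ 3` and `0 ≤ λ ≤ (2^{s-1} - 3 - 2(-1)^s)/3` we have
`P(s, 2^{s-1} - 2λ) ≤ 2^s - 1 - 3λ`, witnessed by an actual PIR matrix. -/
theorem stmt_2 (s : ℕ) (hs : 3 ≤ s) (lam : ℕ)
    (hlam : (3 * lam : ℤ) ≤ 2 ^ (s - 1) - 3 - 2 * (-1 : ℤ) ^ s) :
    PIRlen s (2 ^ (s - 1) - 2 * lam) ≤ 2 ^ s - 1 - 3 * lam ∧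
    ∃ G : Matrix (Fin s) (Fin (2 ^ s - 1 - 3 * lam)) (ZMod 2),
      IsPIRMatrix s (2 ^ s - 1 - 3 * lam) (2 ^ (s - 1) - 2 * lam) G := by
  obtain ⟨m, rfl⟩ : ∃ m, s = m + 1 := ⟨s - 1, by omega⟩
  have hm : 2 ≤ m := by omega
  simp only [Nat.add_sub_cancel] at hlam ⊢
  have hLv : (3 * L m : ℤ) = 2^m - 3 + 2 * (-1:ℤ)^m := by
    obtain ⟨k, rfl⟩ : ∃ k, m = k + 2 := ⟨m - 2, by omega⟩
    exact L_val k
  have hsign : ((-1:ℤ))^(m+1) = -((-1:ℤ))^m := by rw [pow_succ]; ring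
  rw [hsign] at hlam
  have hlamL : lam ≤ L m := by
    have h1 : (lam : ℤ) ≤ L m := by linarith
    exact_mod_cast h1
  have hl : 3 * lam + 1 ≤ 2^m := by
    rcases neg_one_pow_cases m with h | h <;>
    · rw [h] at hLv hlam
      have h2 : ((3*lam+1 : ℕ) : ℤ) ≤ ((2^m : ℕ) : ℤ) := by push_cast; linarith
      exact_mod_cast h2
  obtain ⟨a0, b0, hg0⟩ := lines_exist m hm
  have hembinj : Function.Injective (Fin.castLE hlamL) := Fin.castLE_injective hlamL
  have hg1 : Good (a0 ∘ Fin.castLE hlamL) (b0 ∘ Fin.castLE hlamL) := hg0.comp hembinj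
  set a1 : Fin lam → V m := a0 ∘ Fin.castLE hlamL with ha1
  set b1 : Fin lam → V m := b0 ∘ Fin.castLE hlamL with hb1
  set A : Fin lam → V (m+1) := fun j => phi (a1 j) with hA
  set B : Fin lam → V (m+1) := fun j => phi (b1 j) with hB
  have hgAB : Good A B := by
    constructor
    · intro j
      refine ⟨fun h => (hg1.1 j).1 (phi_ker h), fun h => (hg1.1 j).2.1 (phi_ker h),
        fun h => (hg1.1 j).2.2 ?_⟩
      rw [hA, hB] at h
      simp only at h
      rw [← phi_add] at h
      exact phi_ker h
    · intro j j' hne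
      have himg : ∀ jj, ({A jj, B jj, A jj + B jj} : Finset (V (m+1))) =
          ({a1 jj, b1 jj, a1 jj + b1 jj} : Finset (V m)).image phi := by
        intro jj
        rw [hA, hB]
        simp only [Finset.image_insert, Finset.image_singleton, phi_add]
      rw [himg j, himg j']
      exact (Finset.disjoint_image phi_inj).2 (hg1.2 j j' hne)
  have hparA : ∀ j, par (A j) = 0 := fun j => par_phi _
  have hparB : ∀ j, par (B j) = 0 := fun j => par_phi _
  obtain ⟨G, hG⟩ := construction (m+1) lam (by omega) A B hgAB hparA hparB hl
  have h2s : (2:ℕ)^(m+1) = 2^m * 2 := pow_succ 2 m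
  refine ⟨?_, G, hG⟩
  apply Nat.sInf_le
  exact ⟨by omega, G, hG⟩
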